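/- arXiv:2004.05143 — 3 statements merged into one kernel-verified Lean document; each statement's English description precedes it below -/
import Mathlib

section
/- Let A be a real n×n Hurwitz matrix and C a real m×n matrix. Then the improper integral W_o = ∫_0^∞ exp(Aᵀ t) Cᵀ C exp(A t) dt converges entrywise, and W_o satisfies the Lyapunov equation Aᵀ W_o + W_o A + Cᵀ C = 0. -/
open MeasureTheory NormedSpace Set Matrix

/-- A real square matrix is Hurwitz if every eigenvalue of `A`
(viewed as a complex matrix) has negative real part. -/
def IsHurwitz {n : ℕ} (A : Matrix (Fin n) (Fin n) ℝ) : Prop :=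
  ∀ μ ∈ spectrum ℂ (A.map Complex.ofReal), μ.re < 0

/-- The observability Gramian `W_o = ∫_0^∞ exp(Aᵀ t) Cᵀ C exp(A t) dt`,
defined entrywise. -/
noncomputable def obsGram {n m : ℕ} (A : Matrix (Fin n) (Fin n) ℝ)
    (C : Matrix (Fin m) (Fin n) ℝ) : Matrix (Fin n) (Fin n) ℝ :=
  Matrix.of fun i j => ∫ t in Ici (0 : ℝ), (exp (t • Aᵀ) * Cᵀ * C * exp (t • A)) i j

section AuxSection
open Filter Asymptotics Nat
namespace ObsGramProof

attribute [local instance] Matrix.linftyOpNormedAddCommGroup Matrix.linftyOpNormedRing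
  Matrix.linftyOpNormedAlgebra

variable {n : ℕ}

lemma exists_isBigO_exp (A : Matrix (Fin n) (Fin n) ℝ)
    (hA : ∀ μ ∈ spectrum ℂ (A.map Complex.ofReal), μ.re < 0) :
    ∃ ε : ℝ, 0 < ε ∧ ∀ i j : Fin n,
      (fun t : ℝ => exp (t • A) i j) =O[atTop] fun t => Real.exp (-ε * t) := by
  classical
  set A' : Matrix (Fin n) (Fin n) ℂ := A.map Complex.ofReal with hA'def
  obtain ⟨ε₀, hε₀, hspec⟩ : ∃ ε₀ > 0, ∀ μ ∈ spectrum ℂ A', μ.re ≤ -ε₀ := by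
    rcases Set.eq_empty_or_nonempty (spectrum ℂ A') with h | h
    · exact ⟨1, one_pos, fun μ hμ => by rw [h] at hμ; exact absurd hμ (Set.notMem_empty μ)⟩
    · obtain ⟨μ₀, hμ₀, hmax⟩ := Set.exists_max_image _ Complex.re (A'.finite_spectrum) h
      exact ⟨-μ₀.re, by simpa using hA μ₀ hμ₀, fun μ hμ => by
        have := hmax μ hμ; linarith⟩
  set T : Module.End ℂ (Fin n → ℂ) := Matrix.toLinAlgEquiv' A' with hT
  set d : ℕ := Module.finrank ℂ (Fin n → ℂ) with hd
  set P : Submodule ℂ (Fin n → ℂ) :=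
    { carrier := {v | ∃ K : ℝ, ∀ t : ℝ, 0 ≤ t →
        ‖exp (t • A') *ᵥ v‖ ≤ K * (Real.exp (-ε₀ * t) * (1 + t) ^ d)}
      add_mem' := by
        rintro a b ⟨Ka, hKa⟩ ⟨Kb, hKb⟩
        refine ⟨Ka + Kb, fun t ht => ?_⟩
        rw [Matrix.mulVec_add, add_mul]
        exact (norm_add_le _ _).trans (add_le_add (hKa t ht) (hKb t ht))
      zero_mem' := ⟨0, fun t ht => by simp [Matrix.mulVec_zero]⟩
      smul_mem' := by
        rintro c v ⟨K, hK⟩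
        refine ⟨‖c‖ * K, fun t ht => ?_⟩
        rw [Matrix.mulVec_smul, norm_smul, mul_assoc]
        exact mul_le_mul_of_nonneg_left (hK t ht) (norm_nonneg c) } with hP
  have hPtop : ∀ v : Fin n → ℂ, v ∈ P := by
    have htop := Module.End.iSup_maxGenEigenspace_eq_top T
    intro v
    have hv : v ∈ (⊤ : Submodule ℂ (Fin n → ℂ)) := trivial
    rw [← htop] at hv
    refine (iSup_le fun μ => ?_ : (⨆ μ, T.maxGenEigenspace μ) ≤ P) hv
    intro w hw
    rcases eq_or_ne w 0 with rfl | hw0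
    · exact P.zero_mem
    have hμspec : μ ∈ spectrum ℂ A' := by
      rw [← AlgEquiv.spectrum_eq (Matrix.toLinAlgEquiv' (R := ℂ) (n := Fin n)) A']
      rw [← Module.End.hasEigenvalue_iff_mem_spectrum]
      refine Module.End.hasEigenvalue_of_hasGenEigenvalue (k := d) ?_
      refine Module.End.hasGenEigenvalue_iff.mpr ?_
      intro hbot
      rw [Module.End.maxGenEigenspace_eq_genEigenspace_finrank] at hw
      rw [← hd, hbot] at hw
      exact hw0 hw
    have hμre : μ.re ≤ -ε₀ := hspec μ hμspec
    rw [Module.End.maxGenEigenspace_eq_genEigenspace_finrank, ← hd,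
      Module.End.mem_genEigenspace_nat, LinearMap.mem_ker] at hw
    set N : Matrix (Fin n) (Fin n) ℂ := A' - μ • 1 with hN
    have hNd : N ^ d *ᵥ w = 0 := by
      have h1 : Matrix.toLinAlgEquiv' (N ^ d) = (T - μ • 1) ^ d := by
        rw [map_pow]; congr 1
        rw [hN, map_sub, _root_.map_smul, _root_.map_one]
      calc N ^ d *ᵥ w = Matrix.toLinAlgEquiv' (N ^ d) w :=
            (Matrix.toLinAlgEquiv'_apply _ _).symm
        _ = 0 := by rw [h1]; exact hw
    have hNpow : ∀ j, d ≤ j → N ^ j *ᵥ w = 0 := by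
      intro j hj
      have h2 : N ^ j = N ^ (j - d) * N ^ d := by rw [← pow_add, Nat.sub_add_cancel hj]
      rw [h2, ← Matrix.mulVec_mulVec, hNd, Matrix.mulVec_zero]
    refine ⟨∑ j ∈ Finset.range d, (j ! : ℝ)⁻¹ * ‖N ^ j *ᵥ w‖, fun t ht => ?_⟩
    have hsplit : exp (t • A') = Complex.exp (t * μ) • exp (t • N) := by
      have h1 : t • A' = algebraMap ℂ (Matrix (Fin n) (Fin n) ℂ) ((t : ℂ) * μ) + t • N := by
        rw [Algebra.algebraMap_eq_smul_one, mul_smul, ← Complex.coe_algebraMap,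
          algebraMap_smul, hN, smul_sub]
        abel
      have hcomm : Commute (algebraMap ℂ (Matrix (Fin n) (Fin n) ℂ) ((t : ℂ) * μ)) (t • N) :=
        Algebra.commutes _ _
      rw [h1, Matrix.exp_add_of_commute _ _ hcomm]
      have h2 : exp (algebraMap ℂ (Matrix (Fin n) (Fin n) ℂ) ((t : ℂ) * μ))
          = algebraMap ℂ (Matrix (Fin n) (Fin n) ℂ) (Complex.exp ((t : ℂ) * μ)) := by
        rw [Complex.exp_eq_exp_ℂ, algebraMap_exp_comm]
        rfl
      rw [h2, ← Algebra.smul_def]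
    have hsum : exp (t • N) *ᵥ w
        = ∑ j ∈ Finset.range d, ((j ! : ℝ)⁻¹ * t ^ j) • (N ^ j *ᵥ w) := by
      let L0 : Matrix (Fin n) (Fin n) ℂ →ₗ[ℝ] (Fin n → ℂ) :=
        { toFun := fun M => M *ᵥ w
          map_add' := fun M₁ M₂ => Matrix.add_mulVec _ _ _
          map_smul' := fun c M => by simpa using Matrix.smul_mulVec c M w }
      let L : Matrix (Fin n) (Fin n) ℂ →L[ℝ] (Fin n → ℂ) := LinearMap.toContinuousLinearMap L0
      have hsummable : Summable fun j : ℕ => (j ! : ℝ)⁻¹ • (t • N) ^ j :=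
        expSeries_summable' (𝕂 := ℝ) (t • N)
      have h3 : exp (t • N) *ᵥ w = L (∑' j : ℕ, (j ! : ℝ)⁻¹ • (t • N) ^ j) := by
        rw [exp_eq_tsum ℝ]
        rfl
      rw [h3, L.map_tsum hsummable]
      have h4 : ∀ j : ℕ, L ((j ! : ℝ)⁻¹ • (t • N) ^ j)
          = ((j ! : ℝ)⁻¹ * t ^ j) • (N ^ j *ᵥ w) := by
        intro j
        rw [L.map_smul, smul_pow]
        show (j ! : ℝ)⁻¹ • ((t ^ j • N ^ j) *ᵥ w) = _
        rw [Matrix.smul_mulVec, smul_smul]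
      simp_rw [h4]
      refine tsum_eq_sum ?_
      intro j hj
      rw [hNpow j (le_of_not_gt (fun h => hj (Finset.mem_range.mpr h))), smul_zero]
    rw [hsplit, Matrix.smul_mulVec, norm_smul, Complex.norm_exp]
    have hre : ((t : ℂ) * μ).re = t * μ.re := by simp
    have hexp : Real.exp (((t : ℂ) * μ).re) ≤ Real.exp (-ε₀ * t) := by
      rw [hre]
      apply Real.exp_le_exp.mpr
      calc t * μ.re ≤ t * (-ε₀) := mul_le_mul_of_nonneg_left hμre ht
        _ = -ε₀ * t := by ring
    have hnorm : ‖exp (t • N) *ᵥ w‖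
        ≤ (∑ j ∈ Finset.range d, (j ! : ℝ)⁻¹ * ‖N ^ j *ᵥ w‖) * (1 + t) ^ d := by
      rw [hsum]
      refine (norm_sum_le _ _).trans ?_
      rw [Finset.sum_mul]
      refine Finset.sum_le_sum fun j hj => ?_
      rw [norm_smul, Real.norm_eq_abs, abs_mul, abs_inv, abs_of_nonneg (by positivity : (0:ℝ) ≤ (j ! : ℝ)), abs_of_nonneg (pow_nonneg ht j)]
      have htj : t ^ j ≤ (1 + t) ^ d :=
        le_trans (pow_le_pow_left₀ ht (by linarith) j)
          (pow_le_pow_right₀ (by linarith) (le_of_lt (Finset.mem_range.mp hj)))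
      calc (j ! : ℝ)⁻¹ * t ^ j * ‖N ^ j *ᵥ w‖
          ≤ (j ! : ℝ)⁻¹ * (1 + t) ^ d * ‖N ^ j *ᵥ w‖ := by
            refine mul_le_mul_of_nonneg_right (mul_le_mul_of_nonneg_left htj (by positivity)) (norm_nonneg _)
        _ = (j ! : ℝ)⁻¹ * ‖N ^ j *ᵥ w‖ * (1 + t) ^ d := by ring
    calc Real.exp (((t : ℂ) * μ).re) * ‖exp (t • N) *ᵥ w‖
        ≤ Real.exp (-ε₀ * t) * ((∑ j ∈ Finset.range d, (j ! : ℝ)⁻¹ * ‖N ^ j *ᵥ w‖) * (1 + t) ^ d) := by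
          refine mul_le_mul hexp hnorm (norm_nonneg _) (Real.exp_pos _).le
      _ = (∑ j ∈ Finset.range d, (j ! : ℝ)⁻¹ * ‖N ^ j *ᵥ w‖) * (Real.exp (-ε₀ * t) * (1 + t) ^ d) := by ring
  -- now per-entry isBigO
  refine ⟨ε₀ / 2, by positivity, fun i j => ?_⟩
  obtain ⟨K, hK⟩ := hPtop (Pi.single j 1)
  have hmap : ∀ t : ℝ, (exp (t • A)).map Complex.ofReal = exp (t • A') := by
    intro t
    have hcont : Continuous (⇑(Complex.ofRealHom.mapMatrix) :
        Matrix (Fin n) (Fin n) ℝ → Matrix (Fin n) (Fin n) ℂ) :=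
      Continuous.matrix_map continuous_id Complex.continuous_ofReal
    have h5 := map_exp (Complex.ofRealHom.mapMatrix :
        Matrix (Fin n) (Fin n) ℝ →+* Matrix (Fin n) (Fin n) ℂ) hcont (t • A)
    have h6 : Complex.ofRealHom.mapMatrix (t • A) = t • A' := by
      ext i j
      simp [Matrix.map_apply, Matrix.smul_apply, Complex.real_smul, hA'def]
    rw [← h6]
    exact h5
  have hE : ∀ t : ℝ, 0 ≤ t →
      |exp (t • A) i j| ≤ K * (Real.exp (-ε₀ * t) * (1 + t) ^ d) := by
    intro t ht
    have h7 : (exp (t • A') *ᵥ Pi.single j 1) i = ((exp (t • A)) i j : ℂ) := by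
      rw [Matrix.mulVec_single]
      rw [← hmap t]
      simp [Matrix.map_apply]
    calc |exp (t • A) i j| = ‖(exp (t • A') *ᵥ Pi.single j 1) i‖ := by
          rw [h7, Complex.norm_real, Real.norm_eq_abs]
      _ ≤ ‖exp (t • A') *ᵥ Pi.single j 1‖ := norm_le_pi_norm _ i
      _ ≤ K * (Real.exp (-ε₀ * t) * (1 + t) ^ d) := hK t ht
  have h8 : (fun t : ℝ => exp (t • A) i j)
      =O[atTop] fun t => Real.exp (-ε₀ * t) * (1 + t) ^ d := by
    refine IsBigO.of_bound K ?_
    filter_upwards [eventually_ge_atTop (0 : ℝ)] with t ht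
    rw [Real.norm_eq_abs, Real.norm_eq_abs,
      abs_of_nonneg (by positivity : (0:ℝ) ≤ Real.exp (-ε₀ * t) * (1 + t) ^ d)]
    exact hE t ht
  refine h8.trans ?_
  have h9 : (fun t : ℝ => (1 + t) ^ d) =O[atTop] fun t => Real.exp (ε₀ / 2 * t) := by
    have h10 := (isLittleO_pow_exp_pos_mul_atTop d (half_pos hε₀)).isBigO
    have h11 : Tendsto (fun t : ℝ => 1 + t) atTop atTop :=
      tendsto_atTop_add_const_left _ _ tendsto_id
    have h12 := h10.comp_tendsto h11
    have h13 : (fun t : ℝ => Real.exp (ε₀ / 2 * (1 + t)))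
        =O[atTop] fun t => Real.exp (ε₀ / 2 * t) := by
      refine IsBigO.of_bound (Real.exp (ε₀ / 2)) ?_
      filter_upwards with t
      rw [Real.norm_eq_abs, Real.norm_eq_abs, abs_of_nonneg (Real.exp_pos _).le,
        abs_of_nonneg (Real.exp_pos _).le, ← Real.exp_add]
      apply Real.exp_le_exp.mpr
      ring_nf
      exact le_refl _
    exact h12.trans h13
  have h14 : (fun t : ℝ => Real.exp (-ε₀ * t) * (1 + t) ^ d)
      =O[atTop] fun t => Real.exp (-ε₀ * t) * Real.exp (ε₀ / 2 * t) :=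
    (isBigO_refl _ _).mul h9
  have h15 : (fun t : ℝ => Real.exp (-ε₀ * t) * Real.exp (ε₀ / 2 * t))
      = fun t => Real.exp (-(ε₀ / 2) * t) := by
    funext t
    rw [← Real.exp_add]
    ring_nf
  rw [h15] at h14
  exact h14


variable {m : ℕ}

set_option maxHeartbeats 1000000 in
theorem main (A : Matrix (Fin n) (Fin n) ℝ)
    (C : Matrix (Fin m) (Fin n) ℝ)
    (hA : ∀ μ ∈ spectrum ℂ (A.map Complex.ofReal), μ.re < 0) :
    (∀ i j, IntegrableOn
        (fun t : ℝ => (exp (t • Aᵀ) * Cᵀ * C * exp (t • A)) i j) (Ici 0)) ∧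
    Aᵀ * (Matrix.of fun i j => ∫ t in Ici (0 : ℝ),
        (exp (t • Aᵀ) * Cᵀ * C * exp (t • A)) i j)
      + (Matrix.of fun i j => ∫ t in Ici (0 : ℝ),
        (exp (t • Aᵀ) * Cᵀ * C * exp (t • A)) i j) * A + Cᵀ * C = 0 := by
  classical
  obtain ⟨ε, hε, hO⟩ := exists_isBigO_exp A hA
  set g : ℝ → Matrix (Fin n) (Fin n) ℝ :=
    fun t => exp (t • Aᵀ) * Cᵀ * C * exp (t • A) with hg
  have hTr : ∀ t : ℝ, exp (t • Aᵀ) = (exp (t • A))ᵀ := fun t => by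
    rw [← Matrix.transpose_smul, Matrix.exp_transpose]
  have hgcont : Continuous g := by
    have h1 : Continuous fun t : ℝ => exp (t • A) :=
      exp_continuous.comp (continuous_id.smul continuous_const)
    have h2 : Continuous fun t : ℝ => exp (t • Aᵀ) :=
      exp_continuous.comp (continuous_id.smul continuous_const)
    rw [hg]
    exact ((h2.matrix_mul continuous_const).matrix_mul continuous_const).matrix_mul h1
  have hgcont' : ∀ i j, Continuous fun t => g t i j := fun i j =>
    (continuous_apply j).comp ((continuous_apply i).comp hgcont)
  have hentry : ∀ (t : ℝ) (i j : Fin n), g t i j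
      = ∑ l, ∑ k, (Cᵀ * C) k l * (exp (t • A) k i * exp (t • A) l j) := by
    intro t i j
    rw [hg]
    show (exp (t • Aᵀ) * Cᵀ * C * exp (t • A)) i j = _
    rw [Matrix.mul_assoc (exp (t • Aᵀ)), Matrix.mul_apply]
    refine Finset.sum_congr rfl fun l _ => ?_
    rw [Matrix.mul_apply, Finset.sum_mul]
    refine Finset.sum_congr rfl fun k _ => ?_
    rw [hTr t, Matrix.transpose_apply]
    ring
  have hexp2 : (fun t : ℝ => Real.exp (-ε * t) * Real.exp (-ε * t))
      = fun t => Real.exp (-(2 * ε) * t) := by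
    funext t
    rw [← Real.exp_add]
    ring_nf
  have hgO : ∀ i j, (fun t => g t i j) =O[Filter.atTop] fun t => Real.exp (-(2 * ε) * t) := by
    intro i j
    have h3 : (fun t => g t i j)
        =O[Filter.atTop] fun t => Real.exp (-ε * t) * Real.exp (-ε * t) := by
      have h4 : ∀ (l k : Fin n), (fun t => (Cᵀ * C) k l * (exp (t • A) k i * exp (t • A) l j))
          =O[Filter.atTop] fun t => Real.exp (-ε * t) * Real.exp (-ε * t) :=
        fun l k => ((hO k i).mul (hO l j)).const_mul_left _
      have h5 := IsBigO.sum (s := Finset.univ) fun l (_ : l ∈ Finset.univ) =>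
        IsBigO.sum (s := Finset.univ) fun k (_ : k ∈ Finset.univ) => h4 l k
      refine (isBigO_congr ?_ (Eventually.of_forall fun t => rfl)).mpr h5
      exact Eventually.of_forall fun t => by simp only [Finset.sum_apply]; exact hentry t i j
    rwa [hexp2] at h3
  have hint : ∀ i j, IntegrableOn (fun t => g t i j) (Ioi (0 : ℝ)) := fun i j =>
    integrable_of_isBigO_exp_neg (by positivity) ((hgcont' i j).continuousOn) (hgO i j)
  have hderiv : ∀ t : ℝ, HasDerivAt g (Aᵀ * g t + g t * A) t := by
    intro t
    have h1 : HasDerivAt (fun u : ℝ => exp (u • Aᵀ)) (Aᵀ * exp (t • Aᵀ)) t :=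
      hasDerivAt_exp_smul_const' Aᵀ t
    have h2 : HasDerivAt (fun u : ℝ => exp (u • A)) (exp (t • A) * A) t :=
      hasDerivAt_exp_smul_const A t
    have hgB : g = fun y => exp (y • Aᵀ) * (Cᵀ * C) * exp (y • A) := by
      funext y
      show exp (y • Aᵀ) * Cᵀ * C * exp (y • A) = _
      rw [Matrix.mul_assoc (exp (y • Aᵀ)) Cᵀ C]
    rw [hgB]
    have h6 := (h1.mul_const (Cᵀ * C)).mul h2
    exact h6.congr_deriv (by noncomm_ring)
  have hderiv' : ∀ (i j : Fin n) (t : ℝ),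
      HasDerivAt (fun u => g u i j) ((Aᵀ * g t + g t * A) i j) t := by
    intro i j t
    let L0 : Matrix (Fin n) (Fin n) ℝ →ₗ[ℝ] ℝ :=
      { toFun := fun M => M i j
        map_add' := fun M₁ M₂ => rfl
        map_smul' := fun c M => rfl }
    let L : Matrix (Fin n) (Fin n) ℝ →L[ℝ] ℝ := LinearMap.toContinuousLinearMap L0
    exact L.hasFDerivAt.comp_hasDerivAt t (hderiv t)
  have hint' : ∀ i j : Fin n,
      IntegrableOn (fun t => (Aᵀ * g t + g t * A) i j) (Ioi (0 : ℝ)) := by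
    intro i j
    have h7 : (fun t => (Aᵀ * g t + g t * A) i j)
        = fun t => (∑ k, Aᵀ i k * g t k j) + (∑ k, g t i k * A k j) := by
      funext t
      simp [Matrix.add_apply, Matrix.mul_apply]
    rw [h7]
    exact (integrable_finset_sum _ fun k _ => (hint k j).const_mul _).add
      (integrable_finset_sum _ fun k _ => (hint i k).mul_const _)
  have htend : ∀ i j : Fin n, Filter.Tendsto (fun t => g t i j) Filter.atTop (nhds 0) := by
    intro i j
    refine (hgO i j).trans_tendsto ?_
    have : Filter.Tendsto (fun t : ℝ => -(2 * ε) * t) Filter.atTop Filter.atBot :=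
      Filter.tendsto_id.const_mul_atTop_of_neg (by linarith)
    exact Real.tendsto_exp_atBot.comp this
  have hFTC : ∀ i j : Fin n,
      ∫ t in Ioi (0 : ℝ), (Aᵀ * g t + g t * A) i j = -((Cᵀ * C) i j) := by
    intro i j
    have h8 := integral_Ioi_of_hasDerivAt_of_tendsto (a := (0 : ℝ)) (m := 0)
      ((hgcont' i j).continuousWithinAt)
      (fun x _ => hderiv' i j x) (hint' i j) (htend i j)
    rw [h8]
    have h9 : g 0 i j = (Cᵀ * C) i j := by
      rw [hg]
      show (exp ((0:ℝ) • Aᵀ) * Cᵀ * C * exp ((0:ℝ) • A)) i j = _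
      rw [zero_smul, zero_smul, exp_zero, Matrix.one_mul, Matrix.mul_one]
    rw [h9, zero_sub]
  refine ⟨fun i j => (integrableOn_Ici_iff_integrableOn_Ioi).mpr (hint i j), ?_⟩
  ext i j
  have hW : ∀ i j : Fin n, ∫ t in Ici (0 : ℝ), g t i j = ∫ t in Ioi (0 : ℝ), g t i j :=
    fun i j => integral_Ici_eq_integral_Ioi
  show (∑ k, Aᵀ i k * ∫ t in Ici (0:ℝ), g t k j) + (∑ k, (∫ t in Ici (0:ℝ), g t i k) * A k j)
      + (Cᵀ * C) i j = 0
  have hint2 : IntegrableOn (fun t => (Aᵀ * g t) i j) (Ioi (0 : ℝ)) := by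
    have he : (fun t => (Aᵀ * g t) i j) = fun t => ∑ k, Aᵀ i k * g t k j := by
      funext t; rw [Matrix.mul_apply]
    rw [he]
    exact integrable_finset_sum _ fun k _ => (hint k j).const_mul _
  have hint3 : IntegrableOn (fun t => (g t * A) i j) (Ioi (0 : ℝ)) := by
    have he : (fun t => (g t * A) i j) = fun t => ∑ k, g t i k * A k j := by
      funext t; rw [Matrix.mul_apply]
    rw [he]
    exact integrable_finset_sum _ fun k _ => (hint i k).mul_const _
  have h10 : (∑ k, Aᵀ i k * ∫ t in Ici (0:ℝ), g t k j)
      = ∫ t in Ioi (0:ℝ), (Aᵀ * g t) i j := by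
    have he1 : ∀ k : Fin n, Aᵀ i k * (∫ t in Ici (0:ℝ), g t k j)
        = ∫ t in Ioi (0:ℝ), Aᵀ i k * g t k j := fun k => by
      rw [hW, integral_const_mul]
    simp_rw [he1]
    rw [← integral_finset_sum _ fun k _ => (hint k j).const_mul _]
    have he2 : (fun t => ∑ k, Aᵀ i k * g t k j) = fun t => (Aᵀ * g t) i j := by
      funext t; rw [Matrix.mul_apply]
    rw [he2]
  have h11 : (∑ k, (∫ t in Ici (0:ℝ), g t i k) * A k j)
      = ∫ t in Ioi (0:ℝ), (g t * A) i j := by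
    have he1 : ∀ k : Fin n, (∫ t in Ici (0:ℝ), g t i k) * A k j
        = ∫ t in Ioi (0:ℝ), g t i k * A k j := fun k => by
      rw [hW, integral_mul_const]
    simp_rw [he1]
    rw [← integral_finset_sum _ fun k _ => (hint i k).mul_const _]
    have he2 : (fun t => ∑ k, g t i k * A k j) = fun t => (g t * A) i j := by
      funext t; rw [Matrix.mul_apply]
    rw [he2]
  rw [h10, h11, ← integral_add hint2 hint3]
  have he3 : (fun t => (Aᵀ * g t) i j + (g t * A) i j)
      = fun t => (Aᵀ * g t + g t * A) i j := by
    funext t; rw [Matrix.add_apply]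
  rw [he3, hFTC i j]
  ring

end ObsGramProof
end AuxSection


/-- For a Hurwitz matrix `A`, the observability Gramian integral converges entrywise and
satisfies the Lyapunov equation `Aᵀ W_o + W_o A + Cᵀ C = 0`. -/
theorem obsGram_integrable_and_lyapunov {n m : ℕ} (A : Matrix (Fin n) (Fin n) ℝ)
    (C : Matrix (Fin m) (Fin n) ℝ) (hA : IsHurwitz A) :
    (∀ i j, IntegrableOn
        (fun t : ℝ => (exp (t • Aᵀ) * Cᵀ * C * exp (t • A)) i j) (Ici 0)) ∧
    Aᵀ * obsGram A C + obsGram A C * A + Cᵀ * C = 0 :=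
  ObsGramProof.main A C hA
end

section
/- Let A be a real n×n Hurwitz matrix and Q a real n×n matrix. If X and Y are real n×n matrices satisfying Aᵀ X + X A + Q = 0 and Aᵀ Y + Y A + Q = 0, then X = Y; consequently the Lyapunov equation Aᵀ X + X A + Q = 0 has the unique solution X = ∫_0^∞ exp(Aᵀ t) Q exp(A t) dt. -/
open MeasureTheory NormedSpace Set Matrix

open Polynomial

lemma spectrum_transpose {n : ℕ} (B : Matrix (Fin n) (Fin n) ℂ) :
    spectrum ℂ Bᵀ = spectrum ℂ B := by
  ext μ
  simp only [spectrum.mem_iff]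
  have h : (algebraMap ℂ (Matrix (Fin n) (Fin n) ℂ)) μ - Bᵀ =
      ((algebraMap ℂ (Matrix (Fin n) (Fin n) ℂ)) μ - B)ᵀ := by
    rw [transpose_sub]
    congr 1
    rw [Matrix.algebraMap_eq_diagonal, diagonal_transpose]
  rw [h, Matrix.isUnit_iff_isUnit_det, Matrix.det_transpose, ← Matrix.isUnit_iff_isUnit_det]

lemma intertwine_pow {n : ℕ} {B Z C : Matrix (Fin n) (Fin n) ℂ}
    (h : B * Z = Z * C) : ∀ k : ℕ, B ^ k * Z = Z * C ^ k := by
  intro k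
  induction k with
  | zero => simp
  | succ k ih => rw [pow_succ, pow_succ, mul_assoc, h, ← mul_assoc, ih, mul_assoc]

lemma intertwine_aeval {n : ℕ} {B Z C : Matrix (Fin n) (Fin n) ℂ}
    (h : B * Z = Z * C) (p : ℂ[X]) : aeval B p * Z = Z * aeval C p := by
  induction p using Polynomial.induction_on' with
  | add p q hp hq => rw [map_add, map_add, add_mul, mul_add, hp, hq]
  | monomial k a =>
    rw [aeval_monomial, aeval_monomial, Algebra.algebraMap_eq_smul_one, smul_mul_assoc,
      one_mul, smul_mul_assoc, smul_mul_assoc, one_mul, mul_smul_comm, intertwine_pow h]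

lemma lyap_aux {n : ℕ} (A Z : Matrix (Fin n) (Fin n) ℝ) (hA : IsHurwitz A)
    (hZ : Aᵀ * Z + Z * A = 0) : Z = 0 := by
  rcases Nat.eq_zero_or_pos n with hn | hn
  · subst hn; ext i j; exact i.elim0
  haveI : NeZero n := ⟨hn.ne'⟩
  haveI : Nontrivial (Matrix (Fin n) (Fin n) ℂ) := by infer_instance
  letI : NormedRing (Matrix (Fin n) (Fin n) ℂ) := Matrix.linftyOpNormedRing
  letI : NormedAlgebra ℂ (Matrix (Fin n) (Fin n) ℂ) := Matrix.linftyOpNormedAlgebra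
  set f := (Complex.ofRealHom.mapMatrix : Matrix (Fin n) (Fin n) ℝ →+* Matrix (Fin n) (Fin n) ℂ)
  set B := A.map Complex.ofReal with hB
  set Z' := Z.map Complex.ofReal with hZ'def
  have hmap := congrArg f hZ
  simp only [map_add, _root_.map_mul, map_zero, f, RingHom.mapMatrix_apply] at hmap
  have hTmap : (Aᵀ).map (Complex.ofRealHom : ℝ →+* ℂ) = Bᵀ := Matrix.transpose_map
  have h2 : Bᵀ * Z' = Z' * (-B) := by
    rw [mul_neg]
    rw [hTmap] at hmap
    exact eq_neg_of_add_eq_zero_left hmap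
  set p : ℂ[X] := minpoly ℂ Bᵀ with hp
  have key : (0 : Matrix (Fin n) (Fin n) ℂ) = Z' * aeval (-B) p := by
    rw [← intertwine_aeval h2 p, hp, minpoly.aeval, zero_mul]
  have hBspec : ∀ μ ∈ spectrum ℂ B, μ.re < 0 := hA
  have hunit : IsUnit (aeval (-B) p) := by
    by_contra hne
    have h0 : (0 : ℂ) ∈ spectrum ℂ (aeval (-B) p) := by
      rw [spectrum.zero_mem_iff]; exact hne
    rw [spectrum.map_polynomial_aeval] at h0
    obtain ⟨k, hk, hev⟩ := h0
    have hk1 : -k ∈ spectrum ℂ B := by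
      rw [← spectrum.neg_eq] at hk
      simpa using hk
    have hk2 : k ∈ spectrum ℂ Bᵀ := by
      rw [← AlgEquiv.spectrum_eq (Matrix.toLinAlgEquiv' (R := ℂ) (n := Fin n)) Bᵀ]
      refine Module.End.hasEigenvalue_iff_mem_spectrum.mp ?_
      refine Module.End.hasEigenvalue_of_isRoot ?_
      rwa [minpoly.algEquiv_eq]
    rw [spectrum_transpose] at hk2
    have h5 := hBspec _ hk1
    rw [Complex.neg_re] at h5
    linarith [hBspec _ hk2]
  have hZ'0 : Z' = 0 := by
    have h3 := congrArg (fun M => M * (↑hunit.unit⁻¹ : Matrix (Fin n) (Fin n) ℂ)) key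
    simpa [mul_assoc, Matrix.mul_nonsing_inv _ ((Matrix.isUnit_iff_isUnit_det _).mp hunit)]
      using h3.symm
  ext i j
  have := congrFun (congrFun hZ'0 i) j
  simp only [hZ'def, Matrix.map_apply, Matrix.zero_apply] at this ⊢
  exact_mod_cast this

lemma eigen_pow {n : ℕ} {B : Matrix (Fin n) (Fin n) ℂ} {v : Fin n → ℂ} {l : ℂ}
    (hv : B *ᵥ v = l • v) : ∀ k : ℕ, B ^ k *ᵥ v = l ^ k • v := by
  intro k
  induction k with
  | zero => simp
  | succ k ih => rw [pow_succ', ← Matrix.mulVec_mulVec, ih, Matrix.mulVec_smul, hv, smul_smul,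
      ← pow_succ]

set_option maxHeartbeats 1000000 in
lemma mulVec_exp_eigenvector {n : ℕ} {B : Matrix (Fin n) (Fin n) ℂ} {v : Fin n → ℂ} {l : ℂ}
    (hv : B *ᵥ v = l • v) : exp B *ᵥ v = Complex.exp l • v := by
  letI : NormedRing (Matrix (Fin n) (Fin n) ℂ) := Matrix.linftyOpNormedRing
  letI : NormedAlgebra ℂ (Matrix (Fin n) (Fin n) ℂ) := Matrix.linftyOpNormedAlgebra
  have hlin : IsLinearMap ℂ (fun M : Matrix (Fin n) (Fin n) ℂ => M *ᵥ v) :=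
    ⟨fun M N => Matrix.add_mulVec M N v, fun c M => Matrix.smul_mulVec c M v⟩
  let φ₀ : Matrix (Fin n) (Fin n) ℂ →ₗ[ℂ] (Fin n → ℂ) := hlin.mk' _
  let φ : Matrix (Fin n) (Fin n) ℂ →L[ℂ] (Fin n → ℂ) := φ₀.toContinuousLinearMap
  have hφ : ∀ M : Matrix (Fin n) (Fin n) ℂ, φ M = M *ᵥ v := fun _ => rfl
  have hsum : Summable (fun k : ℕ => (k.factorial⁻¹ : ℂ) • B ^ k) :=
    NormedSpace.expSeries_summable' B
  have h1 : exp B *ᵥ v = ∑' k : ℕ, (k.factorial⁻¹ : ℂ) • (B ^ k *ᵥ v) := by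
    rw [← hφ, NormedSpace.exp_eq_tsum ℂ, φ.map_tsum hsum]
    simp only [hφ, Matrix.smul_mulVec]
  rw [h1]
  have h2 : ∀ k : ℕ, (k.factorial⁻¹ : ℂ) • (B ^ k *ᵥ v) = ((k.factorial⁻¹ : ℂ) * l ^ k) • v := by
    intro k; rw [eigen_pow hv k, smul_smul]
  simp only [h2]
  have hsum2 : Summable (fun k : ℕ => (k.factorial⁻¹ : ℂ) * l ^ k) := by
    simpa [smul_eq_mul] using NormedSpace.expSeries_summable' (𝕂 := ℂ) (𝔸 := ℂ) l
  rw [hsum2.tsum_smul_const]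
  congr 1
  rw [Complex.exp_eq_exp_ℂ, NormedSpace.exp_eq_tsum ℂ]
  simp_rw [smul_eq_mul]

set_option maxHeartbeats 1000000 in
lemma exp_spectrum_mem {n : ℕ} (B : Matrix (Fin n) (Fin n) ℂ) {μ : ℂ}
    (hμ : μ ∈ spectrum ℂ (exp B)) : ∃ l ∈ spectrum ℂ B, μ = Complex.exp l := by
  letI : NormedRing (Matrix (Fin n) (Fin n) ℂ) := Matrix.linftyOpNormedRing
  letI : NormedAlgebra ℂ (Matrix (Fin n) (Fin n) ℂ) := Matrix.linftyOpNormedAlgebra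
  have hμ' : μ ∈ spectrum ℂ (Matrix.toLinAlgEquiv' (exp B)) := by
    rw [AlgEquiv.spectrum_eq]; exact hμ
  obtain ⟨v, hv⟩ := (Module.End.hasEigenvalue_iff_mem_spectrum.mpr hμ').exists_hasEigenvector
  have hvv : exp B *ᵥ v = μ • v := by
    have := hv.apply_eq_smul
    rwa [Matrix.toLinAlgEquiv'_apply] at this
  set W : Submodule ℂ (Fin n → ℂ) := Submodule.span ℂ (Set.range fun k : ℕ => B ^ k *ᵥ v) with hW
  have hvW : v ∈ W := Submodule.subset_span ⟨0, by simp⟩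
  have hBW : ∀ w ∈ W, B *ᵥ w ∈ W := by
    intro w hw
    induction hw using Submodule.span_induction with
    | mem x hx =>
      obtain ⟨k, rfl⟩ := hx
      exact Submodule.subset_span ⟨k + 1, by rw [Matrix.mulVec_mulVec, ← pow_succ']⟩
    | zero => simp
    | add x y _ _ hx hy => rw [Matrix.mulVec_add]; exact W.add_mem hx hy
    | smul c x _ hx => rw [Matrix.mulVec_smul]; exact W.smul_mem c hx
  have hμW : ∀ w ∈ W, exp B *ᵥ w = μ • w := by
    intro w hw
    induction hw using Submodule.span_induction with
    | mem x hx =>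
      obtain ⟨k, rfl⟩ := hx
      have hc : exp B * B ^ k = B ^ k * exp B :=
        (((Commute.refl B).pow_right k).exp_left).eq
      rw [Matrix.mulVec_mulVec, hc, ← Matrix.mulVec_mulVec, hvv, Matrix.mulVec_smul]
    | zero => simp
    | add x y _ _ hx hy => rw [Matrix.mulVec_add, hx, hy, smul_add]
    | smul c x _ hx => rw [Matrix.mulVec_smul, hx, smul_comm]
  haveI : Nontrivial W := Submodule.nontrivial_iff_ne_bot.mpr (by
    intro hbot
    exact hv.right (by simpa [hbot] using hvW))
  let g : Module.End ℂ W := (Matrix.toLinAlgEquiv' B : Module.End ℂ (Fin n → ℂ)).restrict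
    (p := W) (q := W) (by
      intro x hx
      rw [Matrix.toLinAlgEquiv'_apply]
      exact hBW x hx)
  obtain ⟨l, hl⟩ := Module.End.exists_eigenvalue g
  obtain ⟨w, hw⟩ := hl.exists_hasEigenvector
  have hwne : (w : Fin n → ℂ) ≠ 0 := fun h => hw.right (Subtype.coe_injective (by simpa using h))
  have hBw : B *ᵥ (w : Fin n → ℂ) = l • (w : Fin n → ℂ) := by
    have := congrArg (Subtype.val) hw.apply_eq_smul
    simpa [g, LinearMap.restrict_apply, Matrix.toLinAlgEquiv'_apply] using this
  have hexp1 : exp B *ᵥ (w : Fin n → ℂ) = Complex.exp l • (w : Fin n → ℂ) :=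
    mulVec_exp_eigenvector hBw
  have hexp2 : exp B *ᵥ (w : Fin n → ℂ) = μ • (w : Fin n → ℂ) := hμW _ w.2
  have hμl : μ = Complex.exp l := by
    have h0 : (μ - Complex.exp l) • (w : Fin n → ℂ) = 0 := by
      rw [sub_smul, ← hexp1, ← hexp2, sub_self]
    rcases smul_eq_zero.mp h0 with h | h
    · exact sub_eq_zero.mp h
    · exact absurd h hwne
  refine ⟨l, ?_, hμl⟩
  rw [← AlgEquiv.spectrum_eq (Matrix.toLinAlgEquiv' (R := ℂ) (n := Fin n)) B]
  refine Module.End.hasEigenvalue_iff_mem_spectrum.mp ?_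
  refine Module.End.hasEigenvalue_of_hasEigenvector (x := (w : Fin n → ℂ)) ⟨?_, hwne⟩
  rw [Module.End.mem_eigenspace_iff, Matrix.toLinAlgEquiv'_apply]
  exact hBw

section Decay

attribute [local instance] Matrix.linftyOpNormedAddCommGroup Matrix.linftyOpNormedRing
  Matrix.linftyOpNormedAlgebra

lemma pow_decay {n : ℕ} (M : Matrix (Fin n) (Fin n) ℂ) {r' r : ℝ} (h0 : 0 < r') (hr : r' < r)
    (hρ : spectralRadius ℂ M < ENNReal.ofReal r') :
    ∃ C : ℝ, 0 < C ∧ ∀ k : ℕ, ‖M ^ k‖ ≤ C * r ^ k := by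
  have hrpos : 0 < r := h0.trans hr
  have htd := spectrum.pow_nnnorm_pow_one_div_tendsto_nhds_spectralRadius M
  have hev : ∀ᶠ k : ℕ in Filter.atTop, (‖M ^ k‖₊ : ENNReal) ^ (1/(k:ℝ)) < ENNReal.ofReal r' :=
    htd.eventually_lt_const hρ
  obtain ⟨K, hK⟩ := Filter.eventually_atTop.mp hev
  set u : ℕ → ℝ := fun k => ‖M ^ k‖ / r ^ k with hu_def
  have hkey : ∀ k : ℕ, max K 1 ≤ k → ‖M ^ k‖ ≤ r' ^ k := by
    intro k hk
    have hk1 : (1 : ℕ) ≤ k := le_trans (le_max_right _ _) hk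
    have h1 := hK k (le_trans (le_max_left _ _) hk)
    have hkne : ((k : ℝ)) ≠ 0 := by exact_mod_cast Nat.one_le_iff_ne_zero.mp hk1
    have h2 : (‖M ^ k‖₊ : ENNReal) = ((‖M ^ k‖₊ : ENNReal) ^ (1/(k:ℝ))) ^ (k : ℝ) := by
      rw [← ENNReal.rpow_mul, one_div, inv_mul_cancel₀ hkne, ENNReal.rpow_one]
    have h3 : (‖M ^ k‖₊ : ENNReal) ≤ (ENNReal.ofReal r') ^ (k : ℝ) := by
      rw [h2]
      exact ENNReal.rpow_le_rpow h1.le (Nat.cast_nonneg k)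
    have h3' : (‖M ^ k‖₊ : ENNReal) ≤ ENNReal.ofReal (r' ^ k) := by
      rwa [ENNReal.rpow_natCast, ← ENNReal.ofReal_pow h0.le] at h3
    have h5 := ENNReal.toReal_mono ENNReal.ofReal_ne_top h3'
    simpa [ENNReal.toReal_ofReal (pow_nonneg h0.le k)] using h5
  have hq : 0 ≤ r' / r := div_nonneg h0.le hrpos.le
  have hq1 : r' / r < 1 := (div_lt_one hrpos).mpr hr
  have htend : Filter.Tendsto u Filter.atTop (nhds 0) := by
    refine squeeze_zero' ?_ ?_ (tendsto_pow_atTop_nhds_zero_of_lt_one hq hq1)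
    · exact Filter.Eventually.of_forall fun k => div_nonneg (norm_nonneg _) (pow_nonneg hrpos.le k)
    · filter_upwards [Filter.eventually_atTop.mpr ⟨max K 1, fun k hk => hkey k hk⟩] with k hk
      rw [hu_def]
      simp only
      rw [div_pow]
      gcongr
  obtain ⟨C₀, hC₀⟩ := htend.bddAbove_range
  refine ⟨max C₀ 1, lt_of_lt_of_le zero_lt_one (le_max_right _ _), fun k => ?_⟩
  have hu : u k ≤ C₀ := hC₀ (Set.mem_range_self k)
  have : ‖M ^ k‖ = u k * r ^ k := by
    rw [hu_def]
    field_simp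
  rw [this]
  have hrk : (0:ℝ) ≤ r ^ k := (pow_pos hrpos k).le
  exact mul_le_mul_of_nonneg_right (hu.trans (le_max_left _ _)) hrk
lemma norm_map_ofReal {n : ℕ} (M : Matrix (Fin n) (Fin n) ℝ) :
    ‖M.map Complex.ofReal‖ = ‖M‖ := by
  rw [Matrix.linfty_opNorm_def, Matrix.linfty_opNorm_def]
  congr 1
  congr 1
  ext i
  congr 1
  ext j
  simp [Matrix.map_apply]

lemma exp_map_ofReal {n : ℕ} (A : Matrix (Fin n) (Fin n) ℝ) (t : ℝ) :
    (exp (t • A)).map Complex.ofReal = exp (t • A.map Complex.ofReal) := by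
  have hcont : Continuous fun M : Matrix (Fin n) (Fin n) ℝ =>
      (Complex.ofRealHom.mapMatrix : Matrix (Fin n) (Fin n) ℝ →+* Matrix (Fin n) (Fin n) ℂ) M := by
    simp only [RingHom.mapMatrix_apply]
    exact Continuous.matrix_map continuous_id Complex.continuous_ofReal
  have h1 := map_exp
    (Complex.ofRealHom.mapMatrix : Matrix (Fin n) (Fin n) ℝ →+* Matrix (Fin n) (Fin n) ℂ)
    hcont (t • A)
  have h2 : (Complex.ofRealHom.mapMatrix : Matrix (Fin n) (Fin n) ℝ →+* _) (t • A)
      = t • A.map Complex.ofReal := by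
    ext i j
    simp [Complex.real_smul]
  have h3 : (exp (t • A)).map Complex.ofReal
      = Complex.ofRealHom.mapMatrix (exp (t • A)) := rfl
  rw [h3]; exact h1.trans (congrArg _ h2)

lemma hurwitz_exp_decay {n : ℕ} (A : Matrix (Fin n) (Fin n) ℝ) (hA : IsHurwitz A) :
    ∃ C ε : ℝ, 0 < C ∧ 0 < ε ∧ ∀ t : ℝ, 0 ≤ t →
      ‖exp (t • A)‖ ≤ C * Real.exp (-(ε * t)) := by
  rcases Nat.eq_zero_or_pos n with hn | hn
  · subst hn
    refine ⟨1, 1, zero_lt_one, zero_lt_one, fun t ht => ?_⟩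
    have hz : exp (t • A) = 0 := by ext i j; exact i.elim0
    rw [hz, norm_zero]
    positivity
  haveI : NeZero n := ⟨hn.ne'⟩
  set B := A.map Complex.ofReal with hB
  -- maximum of real parts of the spectrum
  have hfin : (spectrum ℂ B).Finite := Matrix.finite_spectrum B
  haveI : Nontrivial (Matrix (Fin n) (Fin n) ℂ) := by infer_instance
  have hnonempty : (spectrum ℂ B).Nonempty := spectrum.nonempty B
  set s : Finset ℝ := hfin.toFinset.image Complex.re with hs_def
  have hs : s.Nonempty := by
    obtain ⟨μ, hμ⟩ := hnonempty
    exact ⟨μ.re, Finset.mem_image_of_mem _ (hfin.mem_toFinset.mpr hμ)⟩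
  set m : ℝ := s.max' hs with hm_def
  have hm_neg : m < 0 := by
    obtain ⟨x, hx, hxe⟩ := Finset.mem_image.mp (s.max'_mem hs)
    rw [hm_def, ← hxe]
    exact hA x (hfin.mem_toFinset.mp hx)
  have hm_le : ∀ μ ∈ spectrum ℂ B, μ.re ≤ m :=
    fun μ hμ => s.le_max' _ (Finset.mem_image_of_mem _ (hfin.mem_toFinset.mpr hμ))
  set ε : ℝ := -m / 2 with hε_def
  have hε : 0 < ε := by rw [hε_def]; linarith
  set r' : ℝ := Real.exp (-(3 * ε / 2)) with hr'_def
  set r : ℝ := Real.exp (-ε) with hr_def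
  have hr'pos : 0 < r' := Real.exp_pos _
  have hr'r : r' < r := Real.exp_lt_exp.mpr (by linarith)
  -- spectral radius bound
  have hρ : spectralRadius ℂ (exp B) < ENNReal.ofReal r' := by
    have hlt : ∀ z ∈ spectrum ℂ (exp B), ‖z‖₊ < r'.toNNReal := by
      intro z hz
      obtain ⟨l, hl, rfl⟩ := exp_spectrum_mem B hz
      have h1 : ‖Complex.exp l‖ = Real.exp l.re := by
        rw [Complex.norm_exp]
      have h2 : Real.exp l.re < r' := by
        rw [hr'_def]
        refine Real.exp_lt_exp.mpr ?_
        have := hm_le l hl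
        rw [hε_def] at *
        linarith
      rw [← NNReal.coe_lt_coe, coe_nnnorm, Real.coe_toNNReal _ hr'pos.le, h1]
      exact h2
    have h := spectrum.spectralRadius_lt_of_forall_lt (exp B) hlt
    simpa [ENNReal.ofReal] using h
  obtain ⟨C₁, hC₁pos, hC₁⟩ := pow_decay (exp B) hr'pos hr'r hρ
  have hcont : Continuous fun u : ℝ => exp (u • B) :=
    NormedSpace.exp_continuous.comp (continuous_id.smul continuous_const)
  obtain ⟨M₀, hM₀⟩ := (isCompact_Icc : IsCompact (Icc (0:ℝ) 1)).exists_bound_of_continuousOn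
    hcont.continuousOn
  set M' : ℝ := max M₀ 1 with hM'_def
  have hM'pos : 0 < M' := lt_of_lt_of_le zero_lt_one (le_max_right _ _)
  refine ⟨M' * C₁ * Real.exp ε, ε, by positivity, hε, fun t ht => ?_⟩
  set k : ℕ := ⌊t⌋₊ with hk_def
  have hk1 : (k : ℝ) ≤ t := Nat.floor_le ht
  have hk2 : t < k + 1 := Nat.lt_floor_add_one t
  have hsplit : t • B = (t - k) • B + (k : ℝ) • B := by
    rw [← add_smul]; ring_nf
  have hcomm : Commute ((t - k) • B) ((k : ℝ) • B) :=
    ((Commute.refl B).smul_left (t - k)).smul_right (k : ℝ)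
  have hexp1 : exp (t • B) = exp ((t - k) • B) * exp ((k : ℝ) • B) := by
    rw [hsplit, Matrix.exp_add_of_commute _ _ hcomm]
  have hpow : exp ((k : ℝ) • B) = exp B ^ k := by
    rw [Nat.cast_smul_eq_nsmul ℝ k B, Matrix.exp_nsmul]
  have hbdd : ‖exp ((t - k) • B)‖ ≤ M' := by
    refine le_trans (hM₀ _ ⟨by linarith, by linarith⟩) (le_max_left _ _)
  have hnorm1 : ‖exp (t • A)‖ = ‖exp (t • B)‖ := by
    rw [← norm_map_ofReal, exp_map_ofReal]
  have hrk : r ^ k ≤ Real.exp ε * Real.exp (-(ε * t)) := by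
    rw [hr_def, ← Real.exp_nat_mul, ← Real.exp_add]
    refine Real.exp_le_exp.mpr ?_
    have : (k : ℝ) ≥ t - 1 := by linarith
    nlinarith [hε.le]
  calc ‖exp (t • A)‖ = ‖exp (t • B)‖ := hnorm1
    _ ≤ ‖exp ((t - k) • B)‖ * ‖exp ((k : ℝ) • B)‖ := by rw [hexp1]; exact norm_mul_le _ _
    _ ≤ M' * (C₁ * r ^ k) := by
        refine mul_le_mul hbdd ?_ (norm_nonneg _) hM'pos.le
        rw [hpow]; exact hC₁ k
    _ ≤ M' * (C₁ * (Real.exp ε * Real.exp (-(ε * t)))) := by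
        refine mul_le_mul_of_nonneg_left (mul_le_mul_of_nonneg_left hrk hC₁pos.le) hM'pos.le
    _ = M' * C₁ * Real.exp ε * Real.exp (-(ε * t)) := by ring

lemma isHurwitz_transpose {n : ℕ} {A : Matrix (Fin n) (Fin n) ℝ} (hA : IsHurwitz A) :
    IsHurwitz Aᵀ := by
  intro μ hμ
  apply hA
  rwa [show (Aᵀ).map Complex.ofReal = (A.map Complex.ofReal)ᵀ from Matrix.transpose_map,
    spectrum_transpose] at hμ

set_option maxHeartbeats 1000000 in
lemma lyap_integral {n : ℕ} (A Q X : Matrix (Fin n) (Fin n) ℝ) (hA : IsHurwitz A)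
    (hX : Aᵀ * X + X * A + Q = 0) :
    ∀ i j, X i j = ∫ t in Ici (0 : ℝ), (exp (t • Aᵀ) * Q * exp (t • A)) i j := by
  obtain ⟨C₁, ε₁, hC₁, hε₁, hd₁⟩ := hurwitz_exp_decay A hA
  obtain ⟨C₂, ε₂, hC₂, hε₂, hd₂⟩ := hurwitz_exp_decay Aᵀ (isHurwitz_transpose hA)
  set F : ℝ → Matrix (Fin n) (Fin n) ℝ :=
    fun t => exp (t • Aᵀ) * Q * exp (t • A) with hF_def
  set f : ℝ → Matrix (Fin n) (Fin n) ℝ :=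
    fun t => exp (t • Aᵀ) * X * exp (t • A) with hf_def
  have hQ : Aᵀ * X + X * A = -Q := eq_neg_of_add_eq_zero_left hX
  have hexpcont : ∀ M : Matrix (Fin n) (Fin n) ℝ, Continuous fun u : ℝ => exp (u • M) :=
    fun M => NormedSpace.exp_continuous.comp (continuous_id.smul continuous_const)
  have hFcont : Continuous F :=
    ((hexpcont Aᵀ).mul continuous_const).mul (hexpcont A)
  -- derivative
  have hDeriv : ∀ t : ℝ, HasDerivAt f (-(F t)) t := by
    intro t
    have h1 : HasDerivAt (fun u : ℝ => exp (u • Aᵀ)) (Aᵀ * exp (t • Aᵀ)) t :=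
      hasDerivAt_exp_smul_const' Aᵀ t
    have h2 : HasDerivAt (fun u : ℝ => exp (u • A)) (exp (t • A) * A) t :=
      hasDerivAt_exp_smul_const A t
    have h4 := (h1.mul_const X).mul h2
    have e1 : Aᵀ * exp (t • Aᵀ) = exp (t • Aᵀ) * Aᵀ :=
      ((((Commute.refl Aᵀ).smul_left t).exp_left).eq).symm
    have e2 : exp (t • A) * A = A * exp (t • A) :=
      (((Commute.refl A).smul_left t).exp_left).eq
    have key : Aᵀ * exp (t • Aᵀ) * X * exp (t • A)
        + exp (t • Aᵀ) * X * (exp (t • A) * A) = -(F t) := by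
      rw [e1, e2, hF_def]
      simp only
      rw [show (Q : Matrix (Fin n) (Fin n) ℝ) = -(Aᵀ * X + X * A) by rw [hQ, neg_neg]]
      noncomm_ring
    rw [← key]
    exact h4
  -- integrability
  have hgint : IntegrableOn (fun t : ℝ => (C₂ * ‖Q‖ * C₁) * Real.exp (-((ε₁ + ε₂) * t)))
      (Ici (0:ℝ)) := by
    have h0 : IntegrableOn (fun t : ℝ => Real.exp (-(ε₁ + ε₂) * t)) (Ioi (0:ℝ)) :=
      exp_neg_integrableOn_Ioi 0 (by linarith)
    have h1 : IntegrableOn (fun t : ℝ => Real.exp (-((ε₁ + ε₂) * t))) (Ici (0:ℝ)) := by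
      rw [integrableOn_Ici_iff_integrableOn_Ioi]
      have he : (fun t : ℝ => Real.exp (-((ε₁ + ε₂) * t)))
          = fun t : ℝ => Real.exp (-(ε₁ + ε₂) * t) := by
        funext t; ring_nf
      rw [he]; exact h0
    exact h1.const_mul _
  have hFbound : ∀ t : ℝ, 0 ≤ t → ‖F t‖ ≤ (C₂ * ‖Q‖ * C₁) * Real.exp (-((ε₁ + ε₂) * t)) := by
    intro t ht
    have b1 := hd₁ t ht
    have b2 := hd₂ t ht
    calc ‖F t‖ ≤ ‖exp (t • Aᵀ) * Q‖ * ‖exp (t • A)‖ := norm_mul_le _ _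
      _ ≤ ‖exp (t • Aᵀ)‖ * ‖Q‖ * ‖exp (t • A)‖ :=
        mul_le_mul_of_nonneg_right (norm_mul_le _ _) (norm_nonneg _)
      _ ≤ (C₂ * Real.exp (-(ε₂ * t))) * ‖Q‖ * (C₁ * Real.exp (-(ε₁ * t))) := by
        refine mul_le_mul (mul_le_mul_of_nonneg_right b2 (norm_nonneg _)) b1 (norm_nonneg _) ?_
        positivity
      _ = (C₂ * ‖Q‖ * C₁) * Real.exp (-((ε₁ + ε₂) * t)) := by
        rw [show -((ε₁ + ε₂) * t) = -(ε₂ * t) + -(ε₁ * t) by ring, Real.exp_add]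
        ring
  letI : ContinuousENorm (Matrix (Fin n) (Fin n) ℝ) :=
    { enorm := fun M => ‖M‖ₑ
      continuous_enorm := ENNReal.continuous_coe.comp continuous_nnnorm }
  letI : TopologicalSpace.PseudoMetrizableSpace (Matrix (Fin n) (Fin n) ℝ) :=
    inferInstanceAs (TopologicalSpace.PseudoMetrizableSpace (Fin n → Fin n → ℝ))
  have hFint : IntegrableOn F (Ici (0:ℝ)) := by
    refine hgint.mono' (hFcont.aestronglyMeasurable.restrict) ?_
    rw [ae_restrict_iff' measurableSet_Ici]
    exact Filter.Eventually.of_forall fun t ht => hFbound t ht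
  -- FTC on finite intervals
  have hFTC : ∀ T : ℝ, 0 ≤ T → (∫ t in (0:ℝ)..T, F t) = X - f T := by
    intro T _
    have h := intervalIntegral.integral_eq_sub_of_hasDerivAt
      (f := f) (f' := fun t => -(F t)) (fun t _ => hDeriv t)
      ((hFcont.neg).intervalIntegrable 0 T)
    rw [intervalIntegral.integral_neg] at h
    have hf0 : f 0 = X := by
      rw [hf_def]
      simp [NormedSpace.exp_zero]
    have := congrArg Neg.neg h
    rw [neg_neg, neg_sub, hf0] at this
    exact this
  -- limit of f at infinity
  have htendf : Filter.Tendsto f Filter.atTop (nhds 0) := by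
    have hg2 : Filter.Tendsto (fun t : ℝ => (C₂ * ‖X‖ * C₁) * Real.exp (-((ε₁ + ε₂) * t)))
        Filter.atTop (nhds 0) := by
      have h1 : Filter.Tendsto (fun t : ℝ => (ε₁ + ε₂) * t) Filter.atTop Filter.atTop :=
        Filter.Tendsto.const_mul_atTop (by linarith) Filter.tendsto_id
      have h2 : Filter.Tendsto (fun t : ℝ => Real.exp (-((ε₁ + ε₂) * t))) Filter.atTop
          (nhds 0) := Real.tendsto_exp_neg_atTop_nhds_zero.comp h1
      simpa using h2.const_mul (C₂ * ‖X‖ * C₁)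
    refine squeeze_zero_norm' ?_ hg2
    filter_upwards [Filter.eventually_ge_atTop (0:ℝ)] with t ht
    have b1 := hd₁ t ht
    have b2 := hd₂ t ht
    calc ‖f t‖ ≤ ‖exp (t • Aᵀ)‖ * ‖X‖ * ‖exp (t • A)‖ :=
        le_trans (norm_mul_le _ _)
          (mul_le_mul_of_nonneg_right (norm_mul_le _ _) (norm_nonneg _))
      _ ≤ (C₂ * Real.exp (-(ε₂ * t))) * ‖X‖ * (C₁ * Real.exp (-(ε₁ * t))) := by
        refine mul_le_mul (mul_le_mul_of_nonneg_right b2 (norm_nonneg _)) b1 (norm_nonneg _) ?_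
        positivity
      _ = (C₂ * ‖X‖ * C₁) * Real.exp (-((ε₁ + ε₂) * t)) := by
        rw [show -((ε₁ + ε₂) * t) = -(ε₂ * t) + -(ε₁ * t) by ring, Real.exp_add]
        ring
  -- identify the improper integral
  have hlim1 : Filter.Tendsto (fun T : ℝ => ∫ t in (0:ℝ)..T, F t) Filter.atTop (nhds X) := by
    have : Filter.Tendsto (fun T : ℝ => X - f T) Filter.atTop (nhds X) := by
      simpa using tendsto_const_nhds.sub htendf
    refine this.congr' ?_
    filter_upwards [Filter.eventually_ge_atTop (0:ℝ)] with T hT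
    exact (hFTC T hT).symm
  have hlim2 : Filter.Tendsto (fun T : ℝ => ∫ t in (0:ℝ)..T, F t) Filter.atTop
      (nhds (∫ t in Ioi (0:ℝ), F t)) :=
    MeasureTheory.intervalIntegral_tendsto_integral_Ioi 0
      (hFint.mono_set Ioi_subset_Ici_self) Filter.tendsto_id
  have hIX : (∫ t in Ici (0:ℝ), F t) = X := by
    rw [MeasureTheory.integral_Ici_eq_integral_Ioi]
    exact tendsto_nhds_unique hlim2 hlim1
  intro i j
  let φ₀ : Matrix (Fin n) (Fin n) ℝ →ₗ[ℝ] ℝ :=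
    (LinearMap.proj j).comp (LinearMap.proj (R := ℝ) (φ := fun _ : Fin n => Fin n → ℝ) i)
  let φ : Matrix (Fin n) (Fin n) ℝ →L[ℝ] ℝ := LinearMap.toContinuousLinearMap φ₀
  have hφ : ∀ M : Matrix (Fin n) (Fin n) ℝ, φ M = M i j := fun _ => rfl
  have hcomm := φ.integral_comp_comm hFint
  calc X i j = φ X := (hφ X).symm
    _ = φ (∫ t in Ici (0:ℝ), F t) := by rw [hIX]
    _ = ∫ t in Ici (0:ℝ), φ (F t) := hcomm.symm
    _ = ∫ t in Ici (0:ℝ), (F t) i j := by simp_rw [hφ]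

end Decay


/-- For a Hurwitz matrix `A`, the Lyapunov equation `Aᵀ X + X A + Q = 0` has at most one
solution; consequently its unique solution is `X = ∫_0^∞ exp(Aᵀ t) Q exp(A t) dt`. -/
theorem lyapunov_unique_solution {n : ℕ} (A Q X Y : Matrix (Fin n) (Fin n) ℝ)
    (hA : IsHurwitz A)
    (hX : Aᵀ * X + X * A + Q = 0) (hY : Aᵀ * Y + Y * A + Q = 0) :
    X = Y ∧
    X = Matrix.of fun i j => ∫ t in Ici (0 : ℝ), (exp (t • Aᵀ) * Q * exp (t • A)) i j := by
  constructor
  · have h0 : Aᵀ * (X - Y) + (X - Y) * A = 0 := by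
      have h1 : Aᵀ * (X - Y) + (X - Y) * A
          = (Aᵀ * X + X * A + Q) - (Aᵀ * Y + Y * A + Q) := by noncomm_ring
      rw [h1, hX, hY, sub_zero]
    have := lyap_aux A (X - Y) hA h0
    exact sub_eq_zero.mp this
  · ext i j
    rw [Matrix.of_apply]
    exact lyap_integral A Q X hA hX i j
end

section
/- Let A be a real n×n matrix that is semistable with a simple zero eigenvalue, with right eigenvector u and left eigenvector w normalized so that wᵀ u = 1. Then for real s > 0 the matrix s·I_n − A is invertible, and s · (s·I_n − A)⁻¹ → u wᵀ as s → 0⁺; i.e. the resolvent of A has a simple pole at s = 0 with residue u wᵀ. -/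
open Filter NormedSpace Matrix Set

open Polynomial in
private lemma eval_charpoly_aux {m : ℕ} (A : Matrix (Fin m) (Fin m) ℝ) (s : ℝ) :
    A.charpoly.eval s = (s • (1 : Matrix (Fin m) (Fin m) ℝ) - A).det := by
  rw [Matrix.charpoly, _root_.eval_det, Matrix.matPolyEquiv_charmatrix]
  simp [Matrix.smul_one_eq_diagonal, Matrix.scalar_apply]

private lemma adjugate_aux {m : ℕ} (B : Matrix (Fin m) (Fin m) ℝ) (v1 v2 : Fin m → ℝ)
    (h1 : B *ᵥ v1 = 0) (h2 : B *ᵥ v2 = 0) (hv1 : v1 ≠ 0)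
    (hv2 : v2 ∉ Submodule.span ℝ {v1}) : B.adjugate = 0 := by
  ext i j
  obtain ⟨v, hv0, hvi, hvk⟩ : ∃ v : Fin m → ℝ, v ≠ 0 ∧ v i = 0 ∧ B *ᵥ v = 0 := by
    by_cases h : v1 i = 0
    · exact ⟨v1, hv1, h, h1⟩
    · refine ⟨v1 i • v2 - v2 i • v1, ?_,
        by simp only [Pi.sub_apply, Pi.smul_apply, smul_eq_mul]; ring, ?_⟩
      · intro h0
        apply hv2
        have h0' : v1 i • v2 = v2 i • v1 := sub_eq_zero.mp h0
        rw [Submodule.mem_span_singleton]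
        refine ⟨(v1 i)⁻¹ * v2 i, ?_⟩
        rw [mul_smul, ← h0', ← mul_smul, inv_mul_cancel₀ h, one_smul]
      · have hlin : B *ᵥ (v1 i • v2 - v2 i • v1)
            = v1 i • (B *ᵥ v2) - v2 i • (B *ᵥ v1) := by
          funext k
          simp only [Matrix.mulVec, dotProduct, Pi.sub_apply, Pi.smul_apply, smul_eq_mul,
            mul_sub, Finset.sum_sub_distrib, Finset.mul_sum]
          congr 1 <;> exact Finset.sum_congr rfl fun x _ => by ring
        rw [hlin, h1, h2]
        simp
  rw [Matrix.adjugate_apply]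
  by_contra hd
  refine hv0 (Matrix.eq_zero_of_mulVec_eq_zero hd ?_)
  funext k
  by_cases hk : k = j
  · subst hk
    simp [Matrix.mulVec, dotProduct, Matrix.updateRow_apply, Pi.single_apply, hvi]
  · have := congrFun hvk k
    simpa [Matrix.mulVec, dotProduct, Matrix.updateRow_apply, hk] using this

set_option maxHeartbeats 1000000 in
/-- If `A` is semistable with a simple zero eigenvalue, with right eigenvector `u` and left
eigenvector `w` normalized so `wᵀ u = 1`, then for real `s > 0` the matrix `s I − A` is
invertible and `s (s I − A)⁻¹ → u wᵀ` as `s → 0⁺`: the resolvent of `A` has a simple pole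
at `s = 0` with residue `u wᵀ`. -/
theorem semistable_resolvent_simple_pole {n : ℕ} (A : Matrix (Fin n) (Fin n) ℝ)
    (u w : Fin n → ℝ)
    (hmult : A.charpoly.rootMultiplicity 0 = 1)
    (hspec : ∀ μ ∈ spectrum ℂ (A.map Complex.ofReal), μ ≠ 0 → μ.re < 0)
    (hu : A.mulVec u = 0) (hw : Aᵀ.mulVec w = 0) (hwu : w ⬝ᵥ u = 1) :
    (∀ s : ℝ, 0 < s → IsUnit (s • (1 : Matrix (Fin n) (Fin n) ℝ) - A)) ∧
    Tendsto (fun s : ℝ => s • (s • (1 : Matrix (Fin n) (Fin n) ℝ) - A)⁻¹)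
      (nhdsWithin 0 (Ioi 0)) (nhds (vecMulVec u w)) := by
  classical
  have hpm : A.charpoly.Monic := A.charpoly_monic
  have hpne : A.charpoly ≠ 0 := hpm.ne_zero
  have hroot : A.charpoly.eval 0 = 0 := by
    have h := (Polynomial.rootMultiplicity_pos hpne (x := 0)).mp (by omega)
    exact h
  set q : Polynomial ℝ := A.charpoly /ₘ Polynomial.X with hqdef
  have hpq : A.charpoly = Polynomial.X * q := by
    have h := Polynomial.modByMonic_add_div A.charpoly Polynomial.X
    rw [Polynomial.modByMonic_X, hroot] at h
    simpa using h.symm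
  have hq0 : q.eval 0 ≠ 0 := by
    intro h
    have hXq : Polynomial.X ∣ q := by
      have := (Polynomial.dvd_iff_isRoot (p := q) (a := 0)).mpr h
      simpa using this
    obtain ⟨r, hr⟩ := hXq
    have h2 : 2 ≤ A.charpoly.rootMultiplicity 0 := by
      rw [Polynomial.le_rootMultiplicity_iff hpne]
      have hX0 : (Polynomial.X - Polynomial.C (0:ℝ)) = Polynomial.X := by simp
      rw [hX0]
      exact ⟨r, by rw [hpq, hr]; ring⟩
    omega
  -- determinant formula
  have hevals : ∀ s : ℝ, (s • (1 : Matrix (Fin n) (Fin n) ℝ) - A).det = s * q.eval s := by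
    intro s
    rw [← eval_charpoly_aux, hpq]
    simp
  -- nonvanishing of the determinant for s > 0
  have hdet : ∀ s : ℝ, 0 < s → (s • (1 : Matrix (Fin n) (Fin n) ℝ) - A).det ≠ 0 := by
    intro s hs hzero
    have hsp : (s : ℂ) ∈ spectrum ℂ (A.map Complex.ofReal) := by
      rw [spectrum.mem_iff]
      intro hunit
      rw [Matrix.isUnit_iff_isUnit_det] at hunit
      have hEq : (algebraMap ℂ (Matrix (Fin n) (Fin n) ℂ)) (s : ℂ) - A.map Complex.ofReal
          = (s • (1 : Matrix (Fin n) (Fin n) ℝ) - A).map Complex.ofReal := by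
        ext i j
        by_cases h : i = j <;>
          simp [Matrix.algebraMap_matrix_apply, Matrix.map_apply, Matrix.one_apply, h]
      have hdetmap : ((s • (1 : Matrix (Fin n) (Fin n) ℝ) - A).map Complex.ofReal).det
          = Complex.ofReal ((s • (1 : Matrix (Fin n) (Fin n) ℝ) - A).det) := by
        have h := RingHom.map_det Complex.ofRealHom (s • (1 : Matrix (Fin n) (Fin n) ℝ) - A)
        exact h.symm
      rw [hEq, hdetmap, hzero] at hunit
      simp at hunit
    have := hspec _ hsp (by exact_mod_cast hs.ne')
    simp at this
    linarith
  have hqs : ∀ s : ℝ, 0 < s → q.eval s ≠ 0 := by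
    intro s hs h
    exact hdet s hs (by rw [hevals, h, mul_zero])
  have hunit : ∀ s : ℝ, 0 < s → IsUnit (s • (1 : Matrix (Fin n) (Fin n) ℝ) - A) := by
    intro s hs
    rw [Matrix.isUnit_iff_isUnit_det]
    exact isUnit_iff_ne_zero.mpr (hdet s hs)
  refine ⟨hunit, ?_⟩
  -- continuity ingredients
  have hBcont : Continuous fun s : ℝ => s • (1 : Matrix (Fin n) (Fin n) ℝ) - A :=
    (continuous_id.smul continuous_const).sub continuous_const
  have hadjc : Continuous fun s : ℝ => (s • (1 : Matrix (Fin n) (Fin n) ℝ) - A).adjugate :=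
    hBcont.matrix_adjugate
  have hqc : Continuous fun s : ℝ => q.eval s := q.continuous
  have hB0 : (0:ℝ) • (1 : Matrix (Fin n) (Fin n) ℝ) - A = -A := by simp
  have hdetneg : (-A).det = 0 := by
    rw [← hB0, hevals]; ring
  have hAM : A * (-A).adjugate = 0 := by
    have h := Matrix.mul_adjugate (-A)
    rw [hdetneg, zero_smul] at h
    have h2 : -(A * (-A).adjugate) = 0 := by rw [← neg_mul]; exact h
    simpa using h2
  -- left eigenvector identity for the adjugate
  have hwadj : ∀ s : ℝ, 0 < s →
      w ᵥ* (s • (1 : Matrix (Fin n) (Fin n) ℝ) - A).adjugate = q.eval s • w := by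
    intro s hs
    have h1 : w ᵥ* (s • (1 : Matrix (Fin n) (Fin n) ℝ) - A) = s • w := by
      rw [Matrix.vecMul_sub]
      have hwa : w ᵥ* A = 0 := by rw [← Matrix.mulVec_transpose, hw]
      rw [hwa, sub_zero, Matrix.smul_one_eq_diagonal]
      funext i
      simp [Matrix.vecMul_diagonal, mul_comm]
    have h2 := Matrix.mul_adjugate (s • (1 : Matrix (Fin n) (Fin n) ℝ) - A)
    have h3 : (s • w) ᵥ* (s • (1 : Matrix (Fin n) (Fin n) ℝ) - A).adjugate
        = (s * q.eval s) • w := by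
      rw [← h1, Matrix.vecMul_vecMul, h2, hevals, Matrix.smul_one_eq_diagonal]
      funext i
      simp [Matrix.vecMul_diagonal, mul_comm]
    rw [Matrix.smul_vecMul] at h3
    have h4 : s • (w ᵥ* (s • (1 : Matrix (Fin n) (Fin n) ℝ) - A).adjugate)
        = s • (q.eval s • w) := by
      rw [h3, smul_smul]
    exact smul_right_injective (Fin n → ℝ) hs.ne' h4
  have hwM : w ᵥ* (-A).adjugate = q.eval 0 • w := by
    have t1 : Tendsto (fun s : ℝ => w ᵥ* (s • (1 : Matrix (Fin n) (Fin n) ℝ) - A).adjugate)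
        (nhdsWithin 0 (Ioi 0)) (nhds (w ᵥ* (-A).adjugate)) := by
      have hcont := (continuous_const.matrix_vecMul hadjc :
        Continuous fun s : ℝ => w ᵥ* (s • (1 : Matrix (Fin n) (Fin n) ℝ) - A).adjugate)
      have := (hcont.tendsto 0).mono_left (nhdsWithin_le_nhds (s := Ioi (0:ℝ)))
      simpa [hB0] using this
    have t2 : Tendsto (fun s : ℝ => q.eval s • w)
        (nhdsWithin 0 (Ioi 0)) (nhds (q.eval 0 • w)) :=
      ((hqc.smul continuous_const).tendsto 0).mono_left nhdsWithin_le_nhds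
    have t1' : Tendsto (fun s : ℝ => q.eval s • w)
        (nhdsWithin 0 (Ioi 0)) (nhds (w ᵥ* (-A).adjugate)) := by
      refine t1.congr' ?_
      filter_upwards [eventually_mem_nhdsWithin] with s hs
      exact hwadj s hs
    exact tendsto_nhds_unique t1' t2
  have hune : u ≠ 0 := by
    intro h
    rw [h] at hwu
    simp at hwu
  -- columns of the adjugate of -A
  have hcol : ∀ j i, (-A).adjugate i j = q.eval 0 * (u i * w j) := by
    intro j
    set c : Fin n → ℝ := fun i => (-A).adjugate i j with hcdef
    have hAc : A *ᵥ c = 0 := by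
      funext i
      have := congrFun (congrFun hAM i) j
      simpa [Matrix.mulVec, dotProduct, Matrix.mul_apply, hcdef] using this
    have hcspan : c ∈ Submodule.span ℝ {u} := by
      by_contra hns
      have hMz : (-A).adjugate = 0 := by
        refine adjugate_aux (-A) u c ?_ ?_ hune hns
        · rw [Matrix.neg_mulVec, hu, neg_zero]
        · rw [Matrix.neg_mulVec, hAc, neg_zero]
      apply hns
      have hc0 : c = 0 := by funext i; simp [hcdef, hMz]
      rw [hc0]
      exact Submodule.zero_mem _
    obtain ⟨t, ht⟩ := Submodule.mem_span_singleton.mp hcspan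
    have hwc : w ⬝ᵥ c = q.eval 0 * w j := by
      have := congrFun hwM j
      simpa [Matrix.vecMul, dotProduct, hcdef] using this
    have htv : t = q.eval 0 * w j := by
      rw [← ht, dotProduct_smul, hwu] at hwc
      simpa using hwc
    intro i
    have h5 := congrFun ht i
    simp only [Pi.smul_apply, smul_eq_mul] at h5
    have h6 : (-A).adjugate i j = c i := rfl
    rw [h6, ← h5, htv]
    ring
  have hMeq : (-A).adjugate = q.eval 0 • vecMulVec u w := by
    ext i j
    rw [hcol j i]
    simp [Matrix.vecMulVec_apply]
  -- the limit
  have hf : ContinuousAt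
      (fun s : ℝ => (q.eval s)⁻¹ • (s • (1 : Matrix (Fin n) (Fin n) ℝ) - A).adjugate) 0 :=
    (hqc.continuousAt.inv₀ hq0).smul hadjc.continuousAt
  have hf0 : (fun s : ℝ => (q.eval s)⁻¹ • (s • (1 : Matrix (Fin n) (Fin n) ℝ) - A).adjugate) 0
      = vecMulVec u w := by
    simp only [hB0]
    rw [hMeq, smul_smul, inv_mul_cancel₀ hq0, one_smul]
  have ht : Tendsto
      (fun s : ℝ => (q.eval s)⁻¹ • (s • (1 : Matrix (Fin n) (Fin n) ℝ) - A).adjugate)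
      (nhdsWithin 0 (Ioi 0)) (nhds (vecMulVec u w)) := by
    rw [← hf0]
    exact hf.tendsto.mono_left nhdsWithin_le_nhds
  refine Filter.Tendsto.congr' ?_ ht
  filter_upwards [eventually_mem_nhdsWithin] with s hs
  have hs0 : (0:ℝ) < s := hs
  have hd := hdet s hs0
  have hq := hqs s hs0
  rw [Matrix.inv_def, Ring.inverse_eq_inv', smul_smul, hevals]
  congr 1
  field_simp
end
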